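/- Suppose the pair (x(u), v(u)) ∈ X × ℝ_+^{ml} solves the primal–dual system (2.4)–(2.5) for a partition u, and u* solves the master variational inequality: ⟨−v(u*), u − u*⟩ ≥ 0 for all u ∈ Ũ = {u : Σᵢ uᵢ = b}. Then x(u*) is a normalized equilibrium point of the original game: x(u*) ∈ D and Φ(x(u*), y) ≥ 0 for all y ∈ D. -/

import Mathlib

open scoped InnerProductSpace RealInnerProductSpace

/-- Sum in `EuclideanSpace` is computed componentwise. -/
lemma euclidean_sum_apply {l M : ℕ} (g : Fin l → EuclideanSpace ℝ (Fin M)) (j : Fin M) :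
    (∑ i, g i) j = ∑ i, g i j :=
  by rw [WithLp.ofLp_sum]; exact Finset.sum_apply j Finset.univ _

/-- Inner product of componentwise-nonnegative vectors is nonnegative. -/
lemma euclidean_inner_nonneg {M : ℕ} (a c : EuclideanSpace ℝ (Fin M))
    (ha : ∀ j, 0 ≤ a j) (hc : ∀ j, 0 ≤ c j) : 0 ≤ ⟪a, c⟫_ℝ := by
  rw [PiLp.inner_apply]
  exact Finset.sum_nonneg fun j _ => mul_nonneg (hc j) (by simpa using ha j)

/-- if `(x(u*), v(u*))` solves the primal–dual system (2.4)–(2.5) and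
`u*` solves the master variational inequality (2.6), then `x(u*)` is a normalized
equilibrium point of the original game. -/
theorem statement16 {l M : ℕ} {n : Fin l → ℕ}
    (X : (i : Fin l) → Set (EuclideanSpace ℝ (Fin (n i))))
    (f : Fin l → ((i : Fin l) → EuclideanSpace ℝ (Fin (n i))) → ℝ)
    (h : (i : Fin l) → EuclideanSpace ℝ (Fin (n i)) → EuclideanSpace ℝ (Fin M))
    (b : EuclideanSpace ℝ (Fin M))
    (us : Fin l → EuclideanSpace ℝ (Fin M)) (hus : ∑ i, us i = b)
    (xs : (i : Fin l) → EuclideanSpace ℝ (Fin (n i))) (hxs : ∀ i, xs i ∈ X i)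
    (vs : Fin l → EuclideanSpace ℝ (Fin M)) (hvs : ∀ i j, 0 ≤ vs i j)
    -- system (2.4)
    (h24 : ∀ i, ∀ yi ∈ X i,
      f i xs - f i (Function.update xs i yi) + ⟪vs i, h i yi - h i (xs i)⟫_ℝ ≥ 0)
    -- system (2.5)
    (h25 : ∀ i, ∀ vi : EuclideanSpace ℝ (Fin M), (∀ j, 0 ≤ vi j) →
      ⟪us i - h i (xs i), vi - vs i⟫_ℝ ≥ 0)
    -- master variational inequality (2.6)
    (hVI : ∀ u : Fin l → EuclideanSpace ℝ (Fin M), (∑ i, u i = b) →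
      ∑ i, ⟪-(vs i), u i - us i⟫_ℝ ≥ 0) :
    ((∀ i, xs i ∈ X i) ∧ ∀ j, (∑ i, h i (xs i)) j ≤ b j) ∧
      ∀ y : (i : Fin l) → EuclideanSpace ℝ (Fin (n i)),
        ((∀ i, y i ∈ X i) ∧ ∀ j, (∑ i, h i (y i)) j ≤ b j) →
        (0:ℝ) ≤ ∑ i, (f i xs - f i (Function.update xs i (y i))) := by
  -- Step 1: componentwise `h i (xs i) j ≤ us i j` follows from (2.5)
  have key : ∀ i j, h i (xs i) j ≤ us i j := by
    intro i j
    have h1 := h25 i (vs i + EuclideanSpace.single j 1)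
      (fun k => by
        by_cases hjk : k = j <;>
          simp [hjk, EuclideanSpace.single_apply, hvs i k, add_nonneg (hvs i k), add_nonneg (hvs i j) zero_le_one])
    have h2 : ⟪us i - h i (xs i), (vs i + EuclideanSpace.single j 1) - vs i⟫_ℝ
        = us i j - h i (xs i) j := by
      rw [add_sub_cancel_left, EuclideanSpace.inner_single_right]
      simp [PiLp.sub_apply]
    rw [h2] at h1
    linarith
  -- Step 2: complementarity `⟪vs i, us i⟫ = ⟪vs i, h i (xs i)⟫`
  have comp : ∀ i, ⟪vs i, us i⟫_ℝ = ⟪vs i, h i (xs i)⟫_ℝ := by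
    intro i
    have h1 := h25 i 0 (fun _ => le_refl 0)
    have h2 : 0 ≤ ⟪us i - h i (xs i), vs i⟫_ℝ :=
      euclidean_inner_nonneg _ _
        (fun j => by simpa [PiLp.sub_apply] using sub_nonneg.mpr (key i j)) (hvs i)
    have h3 : ⟪us i - h i (xs i), (0 : EuclideanSpace ℝ (Fin M)) - vs i⟫_ℝ
        = -⟪us i - h i (xs i), vs i⟫_ℝ := by
      rw [zero_sub, inner_neg_right]
    rw [h3] at h1
    have h4 : ⟪us i - h i (xs i), vs i⟫_ℝ = 0 := le_antisymm (by linarith) h2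
    have h5 : ⟪vs i, us i - h i (xs i)⟫_ℝ = 0 := by
      rw [real_inner_comm]; exact h4
    rw [inner_sub_right] at h5
    linarith
  -- Feasibility of `xs`
  have feas : ∀ j, (∑ i, h i (xs i)) j ≤ b j := by
    intro j
    rw [euclidean_sum_apply, ← hus, euclidean_sum_apply]
    exact Finset.sum_le_sum fun i _ => key i j
  refine ⟨⟨hxs, feas⟩, ?_⟩
  intro y hy
  -- From (2.4): lower-bound each summand
  have step24 : ∀ i, ⟪vs i, h i (xs i)⟫_ℝ - ⟪vs i, h i (y i)⟫_ℝ
      ≤ f i xs - f i (Function.update xs i (y i)) := by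
    intro i
    have := h24 i (y i) (hy.1 i)
    rw [inner_sub_right] at this
    linarith
  have hsum : ∑ i, (⟪vs i, h i (xs i)⟫_ℝ - ⟪vs i, h i (y i)⟫_ℝ)
      ≤ ∑ i, (f i xs - f i (Function.update xs i (y i))) :=
    Finset.sum_le_sum fun i _ => step24 i
  -- It remains to show the left sum is nonnegative
  rcases Nat.eq_zero_or_pos l with hl | hl
  · subst hl
    simp
  · set i0 : Fin l := ⟨0, hl⟩
    set r : EuclideanSpace ℝ (Fin M) := b - ∑ k, h k (y k) with hr
    have hrpos : ∀ j, 0 ≤ r j := by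
      intro j
      have := hy.2 j
      simp only [hr, PiLp.sub_apply]
      linarith
    set u : Fin l → EuclideanSpace ℝ (Fin M) :=
      fun i => h i (y i) + if i = i0 then r else 0 with hu
    have husum : ∑ i, u i = b := by
      rw [hu]
      rw [Finset.sum_add_distrib, Finset.sum_ite_eq' Finset.univ i0 (fun _ => r)]
      simp [hr]
    have hvi := hVI u husum
    have hexp : ∀ i, ⟪-(vs i), u i - us i⟫_ℝ = ⟪vs i, us i⟫_ℝ - ⟪vs i, u i⟫_ℝ := by
      intro i
      rw [inner_neg_left, inner_sub_right]
      ring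
    rw [Finset.sum_congr rfl (fun i _ => hexp i), ge_iff_le] at hvi
    have hvi2 : ∑ i, ⟪vs i, u i⟫_ℝ ≤ ∑ i, ⟪vs i, us i⟫_ℝ := by
      rw [← sub_nonneg, ← Finset.sum_sub_distrib]
      exact hvi
    have huval : ∀ i, ⟪vs i, u i⟫_ℝ
        = ⟪vs i, h i (y i)⟫_ℝ + ⟪vs i, if i = i0 then r else 0⟫_ℝ := by
      intro i
      rw [hu, inner_add_right]
    have hnn : ∀ i, 0 ≤ ⟪vs i, if i = i0 then r else 0⟫_ℝ := by
      intro i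
      by_cases hi : i = i0
      · simp only [hi, if_pos]
        exact euclidean_inner_nonneg _ _ (hvs i0) hrpos
      · simp [hi]
    have hy_le : ∑ i, ⟪vs i, h i (y i)⟫_ℝ ≤ ∑ i, ⟪vs i, u i⟫_ℝ := by
      rw [Finset.sum_congr rfl (fun i _ => huval i), Finset.sum_add_distrib]
      have : 0 ≤ ∑ i, ⟪vs i, if i = i0 then r else 0⟫_ℝ :=
        Finset.sum_nonneg fun i _ => hnn i
      linarith
    have hfinal : 0 ≤ ∑ i, (⟪vs i, h i (xs i)⟫_ℝ - ⟪vs i, h i (y i)⟫_ℝ) := by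
      rw [Finset.sum_sub_distrib]
      have hcomp : ∑ i, ⟪vs i, h i (xs i)⟫_ℝ = ∑ i, ⟪vs i, us i⟫_ℝ :=
        Finset.sum_congr rfl fun i _ => (comp i).symm
      rw [hcomp]
      linarith
    linarith
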